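/- Let α > 1 and β be real numbers, let (n_k)_{k≥0} be an (α,β)-admissible sequence with phase sequence σ_k := n_{k+1} − α·n_k − β·ln(n_k), let ℓ ≥ 1 be an integer, and set m_k := n_{k+ℓ} − n_k. Then (m_{k+1} − α·m_k) − (σ_{k+ℓ} − σ_k) → ℓ·β·ln α as k → ∞. In particular, if (σ_k) converges to a cycle of period ℓ (i.e. for every 0 ≤ j < ℓ the subsequence (σ_{kℓ+j})_{k≥0} converges), then m_{k+1} − α·m_k → ℓ·β·ln α as k → ∞. -/

import Mathlib

open Filter Topology

noncomputable def phaseSeq (α β : ℝ) (n : ℕ → ℕ) (k : ℕ) : ℝ :=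
  (n (k + 1) : ℝ) - α * (n k : ℝ) - β * Real.log (n k)

/-- If every residue-class subsequence of period `ℓ` tends to `c`, so does the sequence. -/
lemma tendsto_of_residues {f : ℕ → ℝ} {c : ℝ} {ℓ : ℕ} (hℓ : 1 ≤ ℓ)
    (h : ∀ j < ℓ, Tendsto (fun k => f (k * ℓ + j)) atTop (𝓝 c)) :
    Tendsto f atTop (𝓝 c) := by
  rw [Metric.tendsto_atTop]
  intro ε hε
  choose N hN using fun j (hj : j < ℓ) => Metric.tendsto_atTop.mp (h j hj) ε hε
  set N' : ℕ → ℕ := fun j => if h : j < ℓ then N j h else 0 with hN'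
  refine ⟨ℓ * ((Finset.range ℓ).sup N' + 1), fun m hm => ?_⟩
  have hj : m % ℓ < ℓ := Nat.mod_lt _ (by omega)
  have hsup : N' (m % ℓ) ≤ (Finset.range ℓ).sup N' :=
    Finset.le_sup (Finset.mem_range.mpr hj)
  have hq : N (m % ℓ) hj ≤ m / ℓ := by
    have h1 : ℓ * (N' (m % ℓ) + 1) ≤ m := le_trans (by gcongr) hm
    have h2 : N' (m % ℓ) + 1 ≤ m / ℓ :=
      (Nat.le_div_iff_mul_le (by omega : 0 < ℓ)).mpr
        (le_trans (le_of_eq (Nat.mul_comm _ _)) h1)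
    have hNeq : N' (m % ℓ) = N (m % ℓ) hj := dif_pos hj
    omega
  have := hN (m % ℓ) hj (m / ℓ) hq
  have heq : m / ℓ * ℓ + m % ℓ = m := Nat.div_add_mod' m ℓ
  rwa [heq] at this

/-- For an `(α,β)`-admissible sequence `(n_k)` and `m_k := n_{k+ℓ} - n_k`, one has
`(m_{k+1} - α m_k) - (σ_{k+ℓ} - σ_k) → ℓ β ln α`. In particular, if `(σ_k)` converges to a
cycle of period `ℓ`, then `m_{k+1} - α m_k → ℓ β ln α`. -/
theorem difference_sequence_phase (α β : ℝ) (hα : 1 < α) (n : ℕ → ℕ)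
    (hmono : StrictMono n) (hpos : ∀ k, 0 < n k)
    (hbdd : ∃ C : ℝ, ∀ k, |phaseSeq α β n k| ≤ C)
    (ℓ : ℕ) (hℓ : 1 ≤ ℓ) :
    Tendsto (fun k =>
        (((n (k + 1 + ℓ) : ℝ) - (n (k + 1) : ℝ)) - α * ((n (k + ℓ) : ℝ) - (n k : ℝ)))
          - (phaseSeq α β n (k + ℓ) - phaseSeq α β n k))
      atTop (𝓝 ((ℓ : ℝ) * β * Real.log α)) ∧
    ((∀ j < ℓ, ∃ L : ℝ,
        Tendsto (fun k => phaseSeq α β n (k * ℓ + j)) atTop (𝓝 L)) →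
      Tendsto (fun k =>
          ((n (k + 1 + ℓ) : ℝ) - (n (k + 1) : ℝ)) - α * ((n (k + ℓ) : ℝ) - (n k : ℝ)))
        atTop (𝓝 ((ℓ : ℝ) * β * Real.log α))) := by
  obtain ⟨C, hC⟩ := hbdd
  have hnpos : ∀ k, (0 : ℝ) < (n k : ℝ) := fun k => by exact_mod_cast hpos k
  have hntop : Tendsto (fun k => (n k : ℝ)) atTop atTop := by
    apply tendsto_natCast_atTop_atTop.comp
    exact hmono.tendsto_atTop
  -- ratio n_{k+1}/n_k → α
  have hratio : Tendsto (fun k => (n (k + 1) : ℝ) / (n k : ℝ)) atTop (𝓝 α) := by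
    have h1 : Tendsto (fun k => Real.log (n k) / (n k : ℝ)) atTop (𝓝 0) :=
      (Real.isLittleO_log_id_atTop.tendsto_div_nhds_zero).comp hntop
    have h2 : Tendsto (fun k => phaseSeq α β n k / (n k : ℝ)) atTop (𝓝 0) := by
      have hC0 : Tendsto (fun k => C / (n k : ℝ)) atTop (𝓝 0) :=
        tendsto_const_nhds.div_atTop hntop
      refine squeeze_zero_norm (fun k => ?_) hC0
      rw [norm_div, Real.norm_natCast, Real.norm_eq_abs]
      gcongr
      exact hC k
    have key : ∀ k, (n (k + 1) : ℝ) / (n k : ℝ) =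
        α + β * (Real.log (n k) / (n k : ℝ)) + phaseSeq α β n k / (n k : ℝ) := by
      intro k
      have := (hnpos k).ne'
      field_simp [phaseSeq]
      simp only [phaseSeq]; ring
    rw [show α = α + β * 0 + 0 by ring]
    exact Tendsto.congr (fun k => (key k).symm)
      ((tendsto_const_nhds.add ((h1.const_mul β))).add h2)
  -- log differences
  have hlog1 : Tendsto (fun k => Real.log (n (k + 1)) - Real.log (n k)) atTop
      (𝓝 (Real.log α)) := by
    have := (Real.continuousAt_log (by positivity : α ≠ 0)).tendsto.comp hratio
    refine this.congr fun k => ?_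
    rw [Function.comp_apply, Real.log_div (hnpos (k + 1)).ne' (hnpos k).ne']
  have hlogℓ : Tendsto (fun k => Real.log (n (k + ℓ)) - Real.log (n k)) atTop
      (𝓝 ((ℓ : ℝ) * Real.log α)) := by
    have hsum : ∀ k, Real.log (n (k + ℓ)) - Real.log (n k) =
        ∑ i ∈ Finset.range ℓ, (Real.log (n (k + (i + 1))) - Real.log (n (k + i))) := by
      intro k
      rw [Finset.sum_range_sub (fun i => Real.log (n (k + i)))]
      simp
    rw [show (ℓ : ℝ) * Real.log α = ∑ _i ∈ Finset.range ℓ, Real.log α by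
      simp [mul_comm]]
    refine Tendsto.congr (fun k => (hsum k).symm) ?_
    refine tendsto_finset_sum _ fun i _ => ?_
    exact hlog1.comp (tendsto_add_atTop_nat i) |>.congr fun k => by
      simp [Function.comp, add_assoc]
  -- part 1
  have part1 : Tendsto (fun k =>
      (((n (k + 1 + ℓ) : ℝ) - (n (k + 1) : ℝ)) - α * ((n (k + ℓ) : ℝ) - (n k : ℝ)))
        - (phaseSeq α β n (k + ℓ) - phaseSeq α β n k))
      atTop (𝓝 ((ℓ : ℝ) * β * Real.log α)) := by
    have := hlogℓ.const_mul β
    rw [show β * ((ℓ : ℝ) * Real.log α) = (ℓ : ℝ) * β * Real.log α by ring] at this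
    refine this.congr fun k => ?_
    have hidx : k + 1 + ℓ = k + ℓ + 1 := by omega
    rw [hidx]
    simp only [phaseSeq]
    ring
  refine ⟨part1, fun hcyc => ?_⟩
  choose L hL using hcyc
  have hdiff : Tendsto (fun k => phaseSeq α β n (k + ℓ) - phaseSeq α β n k)
      atTop (𝓝 0) := by
    apply tendsto_of_residues hℓ (f := fun m => phaseSeq α β n (m + ℓ) - phaseSeq α β n m)
    intro j hj
    have h1 := hL j hj
    have h2 : Tendsto (fun k => phaseSeq α β n ((k + 1) * ℓ + j)) atTop (𝓝 (L j hj)) :=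
      h1.comp (tendsto_add_atTop_nat 1)
    have := h2.sub h1
    rw [sub_self] at this
    refine this.congr fun k => ?_
    have : (k + 1) * ℓ + j = k * ℓ + j + ℓ := by ring
    rw [this]
  have := part1.add hdiff
  rw [add_zero] at this
  refine this.congr fun k => ?_
  ring
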